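/- For every integer k ≥ 1, the second group cohomology of the integer Heisenberg group Heis^ℤ(k) with coefficients in ℤ (with trivial Heis^ℤ(k)-action) is isomorphic, as an abelian group, to ℤ × ℤ × (ℤ/kℤ). -/

import Mathlib

/-- The integer Heisenberg group `Heis k`: underlying set `ℤ³` with multiplication
`(a₁,b₁,c₁)·(a₂,b₂,c₂) = (a₁+a₂, b₁+b₂, c₁+c₂+k·a₁·b₂)`. -/
@[ext] structure Heis (k : ℤ) where
  a : ℤ
  b : ℤ
  c : ℤ

namespace Heis

variable {k : ℤ}

instance : Mul (Heis k) :=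
  ⟨fun x y => ⟨x.a + y.a, x.b + y.b, x.c + y.c + k * x.a * y.b⟩⟩

instance : One (Heis k) := ⟨⟨0, 0, 0⟩⟩

instance : Inv (Heis k) := ⟨fun x => ⟨-x.a, -x.b, -x.c + k * x.a * x.b⟩⟩

@[simp] theorem mul_def (x y : Heis k) :
    x * y = ⟨x.a + y.a, x.b + y.b, x.c + y.c + k * x.a * y.b⟩ := rfl

@[simp] theorem one_def : (1 : Heis k) = ⟨0, 0, 0⟩ := rfl

@[simp] theorem inv_def (x : Heis k) :
    x⁻¹ = ⟨-x.a, -x.b, -x.c + k * x.a * x.b⟩ := rfl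

instance : Group (Heis k) where
  mul_assoc x y z := by ext <;> simp <;> ring
  one_mul x := by ext <;> simp
  mul_one x := by ext <;> simp
  inv_mul_cancel x := by ext <;> simp [mul_comm]

end Heis

namespace HeisH2

/-! ### The triangular number helper -/

def T (n : ℤ) : ℤ := n * (n - 1) / 2

lemma two_T (n : ℤ) : 2 * T n = n * (n - 1) := by
  have h : Even ((n - 1) * (n - 1 + 1)) := Int.even_mul_succ_self (n - 1)
  have h2 : (2 : ℤ) ∣ n * (n - 1) := by
    rcases h with ⟨r, hr⟩
    exact ⟨r, by linarith [hr]⟩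
  exact Int.mul_ediv_cancel' h2

lemma T_add (m n : ℤ) : T (m + n) = T m + T n + m * n := by
  have h := two_T (m + n)
  rw [show (m + n) * (m + n - 1) = m * (m - 1) + n * (n - 1) + 2 * (m * n) by ring,
    ← two_T m, ← two_T n] at h
  linarith

@[simp] lemma T_zero : T 0 = 0 := rfl

@[simp] lemma T_one : T 1 = 0 := rfl

/-! ### Powers in `Heis` -/

lemma X_zpow {k : ℤ} (n : ℤ) : (⟨1, 0, 0⟩ : Heis k) ^ n = ⟨n, 0, 0⟩ := by
  induction n using Int.induction_on with
  | zero => rfl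
  | succ m ih => rw [zpow_add_one, ih]; ext <;> simp <;> omega
  | pred m ih => rw [zpow_sub_one, ih]; ext <;> simp <;> omega

lemma Y_zpow {k : ℤ} (n : ℤ) : (⟨0, 1, 0⟩ : Heis k) ^ n = ⟨0, n, 0⟩ := by
  induction n using Int.induction_on with
  | zero => rfl
  | succ m ih => rw [zpow_add_one, ih]; ext <;> simp <;> omega
  | pred m ih => rw [zpow_sub_one, ih]; ext <;> simp <;> omega

lemma Z_zpow {k : ℤ} (n : ℤ) : (⟨0, 0, 1⟩ : Heis k) ^ n = ⟨0, 0, n⟩ := by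
  induction n using Int.induction_on with
  | zero => rfl
  | succ m ih => rw [zpow_add_one, ih]; ext <;> simp <;> omega
  | pred m ih => rw [zpow_sub_one, ih]; ext <;> simp <;> omega

/-! ### Abstract group-theoretic lemmas -/

section Grp

variable {M : Type*} [Group M] {u v w : M} {K : ℤ}

lemma swap_aux (x y : M) (h : Commute x y) (t : M) : x * (y * t) = y * (x * t) := by
  rw [← mul_assoc, h.eq, mul_assoc]

lemma zpow_swap1 (huw : Commute u w) (huv : u * v = v * u * w ^ K) (a : ℤ) :
    u ^ a * v = v * u ^ a * w ^ (K * a) := by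
  have h1 : v * u⁻¹ = u⁻¹ * v * w ^ K := by
    calc v * u⁻¹ = u⁻¹ * (u * v) * u⁻¹ := by group
    _ = u⁻¹ * (v * u * w ^ K) * u⁻¹ := by rw [huv]
    _ = u⁻¹ * v * (u * (w ^ K * u⁻¹)) := by group
    _ = u⁻¹ * v * (u * (u⁻¹ * w ^ K)) := by rw [((huw.zpow_right K).inv_left.symm).eq]
    _ = u⁻¹ * v * w ^ K := by group
  have hneg : u⁻¹ * v = v * u⁻¹ * w ^ (-K) := by rw [h1]; group
  induction a using Int.induction_on with
  | zero => simp
  | succ m ih =>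
    calc u ^ ((m : ℤ) + 1) * v = u ^ (m : ℤ) * (u * v) := by group
    _ = u ^ (m : ℤ) * (v * u * w ^ K) := by rw [huv]
    _ = (u ^ (m : ℤ) * v) * (u * w ^ K) := by group
    _ = v * u ^ (m : ℤ) * w ^ (K * m) * (u * w ^ K) := by rw [ih]
    _ = v * (u ^ (m : ℤ) * (w ^ (K * m) * (u * w ^ K))) := by group
    _ = v * (u ^ (m : ℤ) * (u * (w ^ (K * m) * w ^ K))) := by
          rw [swap_aux _ u ((huw.zpow_right (K * m)).symm) _]
    _ = v * u ^ ((m : ℤ) + 1) * w ^ (K * ((m : ℤ) + 1)) := by group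
  | pred m ih =>
    calc u ^ (-(m : ℤ) - 1) * v = u ^ (-(m : ℤ)) * (u⁻¹ * v) := by group
    _ = u ^ (-(m : ℤ)) * (v * u⁻¹ * w ^ (-K)) := by rw [hneg]
    _ = (u ^ (-(m : ℤ)) * v) * (u⁻¹ * w ^ (-K)) := by group
    _ = v * u ^ (-(m : ℤ)) * w ^ (K * (-(m : ℤ))) * (u⁻¹ * w ^ (-K)) := by rw [ih]
    _ = v * (u ^ (-(m : ℤ)) * (w ^ (K * (-(m : ℤ))) * (u⁻¹ * w ^ (-K)))) := by group
    _ = v * (u ^ (-(m : ℤ)) * (u⁻¹ * (w ^ (K * (-(m : ℤ))) * w ^ (-K)))) := by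
          rw [swap_aux _ u⁻¹ ((huw.zpow_right (K * (-(m : ℤ)))).inv_left.symm) _]
    _ = v * u ^ (-(m : ℤ) - 1) * w ^ (K * (-(m : ℤ) - 1)) := by group

lemma zpow_swap2 (huw : Commute u w) (hvw : Commute v w) (huv : u * v = v * u * w ^ K)
    (a b : ℤ) : u ^ a * v ^ b = v ^ b * u ^ a * w ^ (K * a * b) := by
  have h1 := zpow_swap1 huw huv a
  have h2 : v⁻¹ * u ^ a = u ^ a * v⁻¹ * w ^ (K * a) := by
    calc v⁻¹ * u ^ a = v⁻¹ * (u ^ a * v) * v⁻¹ := by group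
    _ = v⁻¹ * (v * u ^ a * w ^ (K * a)) * v⁻¹ := by rw [h1]
    _ = u ^ a * (w ^ (K * a) * v⁻¹) := by group
    _ = u ^ a * (v⁻¹ * w ^ (K * a)) := by rw [((hvw.zpow_right (K * a)).inv_left.symm).eq]
    _ = u ^ a * v⁻¹ * w ^ (K * a) := by group
  have hneg2 : u ^ a * v⁻¹ = v⁻¹ * u ^ a * w ^ (-(K * a)) := by rw [h2]; group
  induction b using Int.induction_on with
  | zero => simp
  | succ m ih =>
    calc u ^ a * v ^ ((m : ℤ) + 1) = (u ^ a * v ^ (m : ℤ)) * v := by group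
    _ = v ^ (m : ℤ) * u ^ a * w ^ (K * a * m) * v := by rw [ih]
    _ = v ^ (m : ℤ) * (u ^ a * (w ^ (K * a * m) * v)) := by group
    _ = v ^ (m : ℤ) * (u ^ a * (v * w ^ (K * a * m))) := by
          rw [((hvw.zpow_right (K * a * m)).symm).eq]
    _ = v ^ (m : ℤ) * (u ^ a * v) * w ^ (K * a * m) := by group
    _ = v ^ (m : ℤ) * (v * u ^ a * w ^ (K * a)) * w ^ (K * a * m) := by rw [h1]
    _ = v ^ ((m : ℤ) + 1) * u ^ a * w ^ (K * a * ((m : ℤ) + 1)) := by group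
  | pred m ih =>
    calc u ^ a * v ^ (-(m : ℤ) - 1) = (u ^ a * v ^ (-(m : ℤ))) * v⁻¹ := by group
    _ = v ^ (-(m : ℤ)) * u ^ a * w ^ (K * a * (-(m : ℤ))) * v⁻¹ := by rw [ih]
    _ = v ^ (-(m : ℤ)) * (u ^ a * (w ^ (K * a * (-(m : ℤ))) * v⁻¹)) := by group
    _ = v ^ (-(m : ℤ)) * (u ^ a * (v⁻¹ * w ^ (K * a * (-(m : ℤ))))) := by
          rw [((hvw.zpow_right (K * a * (-(m : ℤ)))).inv_left.symm).eq]
    _ = v ^ (-(m : ℤ)) * (u ^ a * v⁻¹) * w ^ (K * a * (-(m : ℤ))) := by group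
    _ = v ^ (-(m : ℤ)) * (v⁻¹ * u ^ a * w ^ (-(K * a))) * w ^ (K * a * (-(m : ℤ))) := by
          rw [hneg2]
    _ = v ^ (-(m : ℤ) - 1) * u ^ a * w ^ (K * a * (-(m : ℤ) - 1)) := by group

lemma prod_form (huw : Commute u w) (hvw : Commute v w) (huv : u * v = v * u * w ^ K)
    (a₁ b₁ e₁ a₂ b₂ e₂ : ℤ) :
    (u ^ a₁ * v ^ b₁ * w ^ e₁) * (u ^ a₂ * v ^ b₂ * w ^ e₂) =
      u ^ (a₁ + a₂) * v ^ (b₁ + b₂) * w ^ (e₁ + e₂ - K * a₂ * b₁) := by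
  have hvu : v ^ b₁ * u ^ a₂ = u ^ a₂ * v ^ b₁ * w ^ (-(K * a₂ * b₁)) := by
    rw [zpow_swap2 huw hvw huv a₂ b₁]; group
  calc (u ^ a₁ * v ^ b₁ * w ^ e₁) * (u ^ a₂ * v ^ b₂ * w ^ e₂)
      = u ^ a₁ * (v ^ b₁ * (w ^ e₁ * (u ^ a₂ * (v ^ b₂ * w ^ e₂)))) := by group
    _ = u ^ a₁ * (v ^ b₁ * (u ^ a₂ * (w ^ e₁ * (v ^ b₂ * w ^ e₂)))) := by
          rw [swap_aux _ _ ((huw.zpow_zpow a₂ e₁).symm) _]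
    _ = u ^ a₁ * (v ^ b₁ * (u ^ a₂ * (v ^ b₂ * (w ^ e₁ * w ^ e₂)))) := by
          rw [swap_aux _ _ ((hvw.zpow_zpow b₂ e₁).symm) _]
    _ = u ^ a₁ * ((v ^ b₁ * u ^ a₂) * (v ^ b₂ * (w ^ e₁ * w ^ e₂))) := by group
    _ = u ^ a₁ * ((u ^ a₂ * v ^ b₁ * w ^ (-(K * a₂ * b₁))) * (v ^ b₂ * (w ^ e₁ * w ^ e₂))) := by
          rw [hvu]
    _ = u ^ a₁ * (u ^ a₂ * (v ^ b₁ * (w ^ (-(K * a₂ * b₁)) * (v ^ b₂ * (w ^ e₁ * w ^ e₂))))) := by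
          group
    _ = u ^ a₁ * (u ^ a₂ * (v ^ b₁ * (v ^ b₂ * (w ^ (-(K * a₂ * b₁)) * (w ^ e₁ * w ^ e₂))))) := by
          rw [swap_aux _ _ ((hvw.zpow_zpow b₂ (-(K * a₂ * b₁))).symm) _]
    _ = u ^ (a₁ + a₂) * v ^ (b₁ + b₂) * w ^ (e₁ + e₂ - K * a₂ * b₁) := by group

end Grp

/-! ### The central extension attached to a normalized cocycle -/

/-- A normalized 2-cocycle on `Heis k` with values in `ℤ`. -/
structure Co (k : ℤ) where
  f : Heis k → Heis k → ℤ
  co : ∀ g h l, f h l - f (g * h) l + f g (h * l) - f g h = 0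
  one : f 1 1 = 0

namespace Co

variable {k : ℤ} (F : Co k)

lemma one_left (g : Heis k) : F.f 1 g = 0 := by
  have h := F.co 1 1 g
  simp only [one_mul] at h
  linarith [F.one]

lemma one_right (g : Heis k) : F.f g 1 = 0 := by
  have h := F.co g 1 1
  simp only [mul_one, one_mul] at h
  linarith [F.one, F.one_left (1 : Heis k)]

lemma inv_symm (g : Heis k) : F.f g⁻¹ g = F.f g g⁻¹ := by
  have h := F.co g g⁻¹ g
  simp only [mul_inv_cancel, inv_mul_cancel] at h
  have h1 := F.one_left g
  have h2 := F.one_right g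
  linarith

end Co

/-- The central extension of `Heis k` by `ℤ` determined by a normalized cocycle. -/
def Ef {k : ℤ} (_F : Co k) : Type := ℤ × Heis k

namespace Ef

variable {k : ℤ} {F : Co k}

instance : Mul (Ef F) := ⟨fun p q => (p.1 + q.1 + F.f p.2 q.2, p.2 * q.2)⟩
instance : One (Ef F) := ⟨(0, 1)⟩
instance : Inv (Ef F) := ⟨fun p => (-p.1 - F.f p.2 p.2⁻¹, p.2⁻¹)⟩

theorem mul_def' (p q : Ef F) :
    p * q = ((p.1 + q.1 + F.f p.2 q.2, p.2 * q.2) : ℤ × Heis k) := rfl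

theorem one_def' : (1 : Ef F) = ((0, 1) : ℤ × Heis k) := rfl

instance : Group (Ef F) where
  mul_assoc p q r := by
    have h := F.co p.2 q.2 r.2
    refine Prod.ext ?_ (mul_assoc _ _ _)
    show p.1 + q.1 + F.f p.2 q.2 + r.1 + F.f (p.2 * q.2) r.2
        = p.1 + (q.1 + r.1 + F.f q.2 r.2) + F.f p.2 (q.2 * r.2)
    linarith
  one_mul p := by
    refine Prod.ext ?_ (one_mul _)
    show 0 + p.1 + F.f 1 p.2 = p.1
    rw [F.one_left]; ring
  mul_one p := by
    refine Prod.ext ?_ (mul_one _)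
    show p.1 + 0 + F.f p.2 1 = p.1
    rw [F.one_right]; ring
  inv_mul_cancel p := by
    refine Prod.ext ?_ (inv_mul_cancel _)
    show -p.1 - F.f p.2 p.2⁻¹ + p.1 + F.f p.2⁻¹ p.2 = 0
    rw [F.inv_symm]; ring

/-- Projection to `Heis k` as a monoid hom. -/
def snd : Ef F →* Heis k where
  toFun p := p.2
  map_one' := rfl
  map_mul' _ _ := rfl

end Ef

/-! ### The key splitting result -/

theorem key (N : ℕ) (F : Co (N : ℤ))
    (hβ : F.f ⟨1,0,0⟩ ⟨0,0,1⟩ = F.f ⟨0,0,1⟩ ⟨1,0,0⟩)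
    (hγ : F.f ⟨0,1,0⟩ ⟨0,0,1⟩ = F.f ⟨0,0,1⟩ ⟨0,1,0⟩)
    (m₀ : ℤ)
    (hα : F.f ⟨1,0,0⟩ ⟨0,1,0⟩ =
      F.f ⟨0,1,0⟩ ⟨1,0,0⟩ + F.f ⟨1,1,0⟩ ⟨0,0,(N:ℤ)⟩ + (N:ℤ) * m₀ +
        ∑ i ∈ Finset.range N, F.f ⟨0,0,(i:ℤ)⟩ ⟨0,0,1⟩) :
    ∃ φ : Heis (N:ℤ) → ℤ, ∀ g h, F.f g h = φ (g * h) - φ g - φ h := by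
  classical
  let u : Ef F := ((0, ⟨1,0,0⟩) : ℤ × Heis (N:ℤ))
  let v : Ef F := ((0, ⟨0,1,0⟩) : ℤ × Heis (N:ℤ))
  let w : Ef F := ((m₀, ⟨0,0,1⟩) : ℤ × Heis (N:ℤ))
  have hwpow : ∀ n : ℕ, w ^ n =
      (((n:ℤ) * m₀ + ∑ i ∈ Finset.range n, F.f ⟨0,0,(i:ℤ)⟩ ⟨0,0,1⟩,
        ⟨0,0,(n:ℤ)⟩) : ℤ × Heis (N:ℤ)) := by
    intro n
    induction n with
    | zero =>
        rw [pow_zero, Ef.one_def']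
        exact Prod.ext (by simp) (by simp)
    | succ n ih =>
        rw [pow_succ, ih]; erw [Ef.mul_def']
        refine Prod.ext ?_ ?_
        · show ((n:ℤ) * m₀ + _) + m₀ + F.f ⟨0,0,(n:ℤ)⟩ ⟨0,0,1⟩ = _
          rw [Finset.sum_range_succ]; push_cast; ring
        · show (⟨0,0,(n:ℤ)⟩ * ⟨0,0,1⟩ : Heis (N:ℤ)) = _
          ext <;> simp <;> push_cast <;> ring
  have huw : Commute u w := by
    show u * w = w * u
    rw [Ef.mul_def', Ef.mul_def']
    refine Prod.ext ?_ ?_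
    · show 0 + m₀ + F.f ⟨1,0,0⟩ ⟨0,0,1⟩ = m₀ + 0 + F.f ⟨0,0,1⟩ ⟨1,0,0⟩
      linarith
    · show (⟨1,0,0⟩ * ⟨0,0,1⟩ : Heis (N:ℤ)) = ⟨0,0,1⟩ * ⟨1,0,0⟩
      ext <;> simp
  have hvw : Commute v w := by
    show v * w = w * v
    rw [Ef.mul_def', Ef.mul_def']
    refine Prod.ext ?_ ?_
    · show 0 + m₀ + F.f ⟨0,1,0⟩ ⟨0,0,1⟩ = m₀ + 0 + F.f ⟨0,0,1⟩ ⟨0,1,0⟩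
      linarith
    · show (⟨0,1,0⟩ * ⟨0,0,1⟩ : Heis (N:ℤ)) = ⟨0,0,1⟩ * ⟨0,1,0⟩
      ext <;> simp
  have huv : u * v = v * u * w ^ ((N:ℕ):ℤ) := by
    rw [zpow_natCast, hwpow N, Ef.mul_def', Ef.mul_def']; erw [Ef.mul_def']
    refine Prod.ext ?_ ?_
    · show 0 + 0 + F.f ⟨1,0,0⟩ ⟨0,1,0⟩ =
        0 + 0 + F.f ⟨0,1,0⟩ ⟨1,0,0⟩ + ((N:ℤ) * m₀ + _) + F.f (⟨0,1,0⟩ * ⟨1,0,0⟩) ⟨0,0,(N:ℤ)⟩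
      have h : (⟨0,1,0⟩ * ⟨1,0,0⟩ : Heis (N:ℤ)) = ⟨1,1,0⟩ := by ext <;> simp
      rw [h]; linarith
    · show ((⟨1,0,0⟩ * ⟨0,1,0⟩ : Heis (N:ℤ))) = (⟨0,1,0⟩ * ⟨1,0,0⟩) * ⟨0,0,(N:ℤ)⟩
      ext <;> simp
  have hmul : ∀ g h : Heis (N:ℤ),
      (u ^ g.a * v ^ g.b * w ^ (g.c - (N:ℤ) * g.a * g.b)) *
        (u ^ h.a * v ^ h.b * w ^ (h.c - (N:ℤ) * h.a * h.b)) =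
      u ^ (g*h).a * v ^ (g*h).b * w ^ ((g*h).c - (N:ℤ) * (g*h).a * (g*h).b) := by
    intro g h
    rw [prod_form huw hvw huv]
    simp only [Heis.mul_def]
    congr 1
    ring
  have hsnd : ∀ g : Heis (N:ℤ),
      (u ^ g.a * v ^ g.b * w ^ (g.c - (N:ℤ) * g.a * g.b)).2 = g := by
    intro g
    have h1 : (u ^ g.a * v ^ g.b * w ^ (g.c - (N:ℤ) * g.a * g.b)).2
        = Ef.snd (u ^ g.a * v ^ g.b * w ^ (g.c - (N:ℤ) * g.a * g.b)) := rfl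
    rw [h1, map_mul, map_mul, map_zpow, map_zpow, map_zpow]
    show (⟨1,0,0⟩ : Heis (N:ℤ)) ^ g.a * (⟨0,1,0⟩ : Heis (N:ℤ)) ^ g.b *
        (⟨0,0,1⟩ : Heis (N:ℤ)) ^ (g.c - (N:ℤ) * g.a * g.b) = g
    rw [X_zpow, Y_zpow, Z_zpow]
    ext <;> simp
  refine ⟨fun g => (u ^ g.a * v ^ g.b * w ^ (g.c - (N:ℤ) * g.a * g.b)).1, fun g h => ?_⟩
  have h1 := congrArg Prod.fst (hmul g h)
  rw [Ef.mul_def'] at h1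
  simp only at h1
  rw [hsnd g, hsnd h] at h1
  linarith


/-! ### Connection with `groupCohomology` -/

open groupCohomology Finset

abbrev twoCocycles {k G : Type} [CommRing k] [Group G] (A : Rep k G) := cocycles₂ A

abbrev twoCoboundaries {k G : Type} [CommRing k] [Group G] (A : Rep k G) :
    Submodule k (twoCocycles A) :=
  LinearMap.range (shortComplexH2 A).moduleCatToCycles

theorem mem_twoCocycles_def {k G : Type} [CommRing k] [Group G] {A : Rep k G} (f : G × G → A) :
    f ∈ twoCocycles A ↔ ∀ g h j : G,
      A.ρ g (f (h, j)) - f (g * h, j) + f (g, h * j) - f (g, h) = 0 :=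
  mem_cocycles₂_def f

theorem mem_twoCoboundaries_iff {k G : Type} [CommRing k] [Group G] {A : Rep k G}
    (f : twoCocycles A) : f ∈ twoCoboundaries A ↔
      ∃ x : G → A, ∀ g h : G, A.ρ g (x h) - x (g * h) + x g = f.1 (g, h) := by
  constructor
  · rintro ⟨x, hx⟩
    exact ⟨x, fun g h => congrArg (fun y : cocycles₂ A => y.1 (g, h)) hx⟩
  · rintro ⟨x, hx⟩
    exact ⟨x, Subtype.ext (funext fun p => hx p.1 p.2)⟩

variable {N : ℕ}

/-- Evaluation of a 2-cocycle, as an integer. -/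
def ev (f : twoCocycles (Rep.trivial ℤ (Heis (N:ℤ)) ℤ))
    (p : Heis (N:ℤ) × Heis (N:ℤ)) : ℤ := f.1 p

@[simp] lemma ev_add (f₁ f₂ : twoCocycles (Rep.trivial ℤ (Heis (N:ℤ)) ℤ)) (p) :
    ev (f₁ + f₂) p = ev f₁ p + ev f₂ p := rfl

@[simp] lemma ev_smul (n : ℤ) (f : twoCocycles (Rep.trivial ℤ (Heis (N:ℤ)) ℤ)) (p) :
    ev (n • f) p = n * ev f p := rfl

@[simp] lemma ev_zero (p) : ev (0 : twoCocycles (Rep.trivial ℤ (Heis (N:ℤ)) ℤ)) p = 0 := rfl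

lemma ev_co (f : twoCocycles (Rep.trivial ℤ (Heis (N:ℤ)) ℤ)) (g h j : Heis (N:ℤ)) :
    ev f (h, j) - ev f (g * h, j) + ev f (g, h * j) - ev f (g, h) = 0 := by
  have h2 := (mem_twoCocycles_def f.1).1 f.2 g h j
  simpa [ev, Rep.trivial_ρ_apply] using h2

lemma mem_tc (f : Heis (N:ℤ) × Heis (N:ℤ) → ℤ)
    (hco : ∀ g h l : Heis (N:ℤ), f (h, l) - f (g*h, l) + f (g, h*l) - f (g, h) = 0) :
    f ∈ twoCocycles (Rep.trivial ℤ (Heis (N:ℤ)) ℤ) := by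
  rw [mem_twoCocycles_def]
  intro g h j
  have h2 := hco g h j
  simpa [Rep.trivial_ρ_apply] using h2

/-- The `α`-invariant of a 2-cocycle. -/
def alph (f : twoCocycles (Rep.trivial ℤ (Heis (N:ℤ)) ℤ)) : ℤ :=
  ev f (⟨1,0,0⟩, ⟨0,1,0⟩) - ev f (⟨0,1,0⟩, ⟨1,0,0⟩) - ev f (⟨1,1,0⟩, ⟨0,0,(N:ℤ)⟩)
    - ∑ i ∈ Finset.range N, ev f (⟨0,0,(i:ℤ)⟩, ⟨0,0,1⟩) + ev f (1, 1)

/-- The complete invariant of a 2-cocycle. -/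
noncomputable def Phi (N : ℕ) :
    twoCocycles (Rep.trivial ℤ (Heis (N:ℤ)) ℤ) →+ ℤ × ℤ × ZMod N where
  toFun f := (ev f (⟨1,0,0⟩, ⟨0,0,1⟩) - ev f (⟨0,0,1⟩, ⟨1,0,0⟩),
              ev f (⟨0,1,0⟩, ⟨0,0,1⟩) - ev f (⟨0,0,1⟩, ⟨0,1,0⟩),
              ((alph f : ℤ) : ZMod N))
  map_zero' := by
    refine Prod.ext ?_ (Prod.ext ?_ ?_) <;> simp [alph]
  map_add' f₁ f₂ := by
    refine Prod.ext ?_ (Prod.ext ?_ ?_)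
    · simp only [ev_add, Prod.fst_add]; ring
    · simp only [ev_add, Prod.snd_add, Prod.fst_add]; ring
    · show ((alph (f₁ + f₂) : ℤ) : ZMod N) = _
      have h : alph (f₁ + f₂) = alph f₁ + alph f₂ := by
        simp [alph, Finset.sum_add_distrib]; ring
      rw [h]; push_cast; rfl

lemma Phi_apply (N : ℕ) (f : twoCocycles (Rep.trivial ℤ (Heis (N:ℤ)) ℤ)) :
    Phi N f = (ev f (⟨1,0,0⟩, ⟨0,0,1⟩) - ev f (⟨0,0,1⟩, ⟨1,0,0⟩),
              ev f (⟨0,1,0⟩, ⟨0,0,1⟩) - ev f (⟨0,0,1⟩, ⟨0,1,0⟩),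
              ((alph f : ℤ) : ZMod N)) := rfl

/-! ### The three generating cocycles -/

noncomputable def Fb (N : ℕ) : twoCocycles (Rep.trivial ℤ (Heis (N:ℤ)) ℤ) :=
  ⟨fun p => (p.1.c - (N:ℤ) * p.1.a * p.1.b) * p.2.a - (N:ℤ) * p.1.b * T p.2.a, by
    apply mem_tc
    intro g h l
    simp only [Heis.mul_def]
    rw [T_add h.a l.a]
    ring⟩

noncomputable def Fg (N : ℕ) : twoCocycles (Rep.trivial ℤ (Heis (N:ℤ)) ℤ) :=
  ⟨fun p => (p.1.c - (N:ℤ) * p.1.a * p.1.b - (N:ℤ) * p.2.a * p.1.b) * p.2.b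
      - (N:ℤ) * p.2.a * T p.1.b, by
    apply mem_tc
    intro g h l
    simp only [Heis.mul_def]
    rw [T_add g.b h.b]
    ring⟩

noncomputable def Fa (N : ℕ) : twoCocycles (Rep.trivial ℤ (Heis (N:ℤ)) ℤ) :=
  ⟨fun p => p.1.a * p.2.b, by
    apply mem_tc
    intro g h l
    simp only [Heis.mul_def]
    ring⟩

lemma ev_Fb (p) : ev (Fb N) p = (p.1.c - (N:ℤ) * p.1.a * p.1.b) * p.2.a
    - (N:ℤ) * p.1.b * T p.2.a := rfl

lemma ev_Fg (p) : ev (Fg N) p = (p.1.c - (N:ℤ) * p.1.a * p.1.b - (N:ℤ) * p.2.a * p.1.b) * p.2.b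
    - (N:ℤ) * p.2.a * T p.1.b := rfl

lemma ev_Fa (p) : ev (Fa N) p = p.1.a * p.2.b := rfl

lemma Phi_Fb (N : ℕ) : Phi N (Fb N) = (-1, 0, 0) := by
  rw [Phi_apply]
  refine Prod.ext ?_ (Prod.ext ?_ ?_)
  · simp [ev_Fb]
  · simp [ev_Fg, ev_Fb]
  · show ((alph (Fb N) : ℤ) : ZMod N) = 0
    have h : alph (Fb N) = 0 := by
      have hs : ∑ i ∈ Finset.range N, ev (Fb N) (⟨0,0,(i:ℤ)⟩, ⟨0,0,1⟩) = 0 :=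
        Finset.sum_eq_zero fun i _ => by simp [ev_Fb]
      simp [alph, hs, ev_Fb, Heis.one_def]
    rw [h]; simp

lemma Phi_Fg (N : ℕ) : Phi N (Fg N) = (0, -1, 0) := by
  rw [Phi_apply]
  refine Prod.ext ?_ (Prod.ext ?_ ?_)
  · simp [ev_Fg]
  · simp [ev_Fg]
  · show ((alph (Fg N) : ℤ) : ZMod N) = 0
    have h : alph (Fg N) = 0 := by
      have hs : ∑ i ∈ Finset.range N, ev (Fg N) (⟨0,0,(i:ℤ)⟩, ⟨0,0,1⟩) = 0 :=
        Finset.sum_eq_zero fun i _ => by simp [ev_Fg]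
      simp [alph, hs, ev_Fg, Heis.one_def]
    rw [h]; simp

lemma Phi_Fa (N : ℕ) : Phi N (Fa N) = (0, 0, 1) := by
  rw [Phi_apply]
  refine Prod.ext ?_ (Prod.ext ?_ ?_)
  · simp [ev_Fa]
  · simp [ev_Fa]
  · show ((alph (Fa N) : ℤ) : ZMod N) = 1
    have h : alph (Fa N) = 1 := by
      have hs : ∑ i ∈ Finset.range N, ev (Fa N) (⟨0,0,(i:ℤ)⟩, ⟨0,0,1⟩) = 0 :=
        Finset.sum_eq_zero fun i _ => by simp [ev_Fa]
      simp [alph, hs, ev_Fa, Heis.one_def]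
    rw [h]; simp

lemma Phi_surj (N : ℕ) : Function.Surjective (Phi N) := by
  rintro ⟨p, q, r⟩
  obtain ⟨r', rfl⟩ := ZMod.intCast_surjective r
  refine ⟨(-p) • Fb N + (-q) • Fg N + r' • Fa N, ?_⟩
  rw [map_add, map_add, map_zsmul, map_zsmul, map_zsmul, Phi_Fb, Phi_Fg, Phi_Fa]
  refine Prod.ext ?_ (Prod.ext ?_ ?_) <;>
    simp [Prod.smul_def, smul_eq_mul, zsmul_eq_mul] <;> push_cast <;> ring


lemma alph_def (f : twoCocycles (Rep.trivial ℤ (Heis (N:ℤ)) ℤ)) :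
    alph f = ev f (⟨1,0,0⟩, ⟨0,1,0⟩) - ev f (⟨0,1,0⟩, ⟨1,0,0⟩) - ev f (⟨1,1,0⟩, ⟨0,0,(N:ℤ)⟩)
      - ∑ i ∈ Finset.range N, ev f (⟨0,0,(i:ℤ)⟩, ⟨0,0,1⟩) + ev f (1, 1) := rfl

lemma cob_le_ker (N : ℕ) (f : twoCocycles (Rep.trivial ℤ (Heis (N:ℤ)) ℤ))
    (hf : f ∈ twoCoboundaries (Rep.trivial ℤ (Heis (N:ℤ)) ℤ)) : Phi N f = 0 := by
  obtain ⟨x, hx⟩ := (mem_twoCoboundaries_iff f).1 hf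
  let x' : Heis (N:ℤ) → ℤ := x
  have hx' : ∀ g h : Heis (N:ℤ), ev f (g, h) = x' h - x' (g * h) + x' g := by
    intro g h
    have h2 := hx g h
    rw [Rep.trivial_ρ_apply] at h2
    exact h2.symm
  have hsum : ∑ i ∈ Finset.range N, ev f (⟨0,0,(i:ℤ)⟩, ⟨0,0,1⟩)
      = (N:ℤ) * x' ⟨0,0,1⟩ + (x' ⟨0,0,((0:ℕ):ℤ)⟩ - x' ⟨0,0,((N:ℕ):ℤ)⟩) := by
    have h1 : ∀ i ∈ Finset.range N, ev f (⟨0,0,(i:ℤ)⟩, ⟨0,0,1⟩)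
        = x' ⟨0,0,1⟩ + (x' ⟨0,0,((i:ℕ):ℤ)⟩ - x' ⟨0,0,(((i+1):ℕ):ℤ)⟩) := by
      intro i _
      rw [hx']
      have h3 : (⟨0,0,((i:ℕ):ℤ)⟩ : Heis (N:ℤ)) * ⟨0,0,1⟩ = ⟨0,0,(((i+1):ℕ):ℤ)⟩ := by
        ext <;> simp
      rw [h3]
      ring
    rw [Finset.sum_congr rfl h1, Finset.sum_add_distrib, Finset.sum_const, Finset.card_range,
      Finset.sum_range_sub' (fun j : ℕ => x' ⟨0,0,((j:ℕ):ℤ)⟩) N]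
    rw [nsmul_eq_mul]
  have ha : alph f = -(N:ℤ) * x' ⟨0,0,1⟩ := by
    rw [alph_def, hsum, hx', hx', hx', hx']
    have e1 : (⟨1,0,0⟩ : Heis (N:ℤ)) * ⟨0,1,0⟩ = ⟨1,1,(N:ℤ)⟩ := by ext <;> simp
    have e2 : (⟨0,1,0⟩ : Heis (N:ℤ)) * ⟨1,0,0⟩ = ⟨1,1,0⟩ := by ext <;> simp
    have e3 : (⟨1,1,0⟩ : Heis (N:ℤ)) * ⟨0,0,(N:ℤ)⟩ = ⟨1,1,(N:ℤ)⟩ := by ext <;> simp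
    have e4 : ((1 : Heis (N:ℤ)) * 1) = 1 := one_mul _
    have e5 : (⟨0,0,((0:ℕ):ℤ)⟩ : Heis (N:ℤ)) = 1 := by ext <;> simp
    rw [e1, e2, e3, e4, e5]
    ring
  rw [Phi_apply]
  refine Prod.ext ?_ (Prod.ext ?_ ?_)
  · show ev f (⟨1,0,0⟩, ⟨0,0,1⟩) - ev f (⟨0,0,1⟩, ⟨1,0,0⟩) = 0
    rw [hx', hx']
    have e : (⟨1,0,0⟩ : Heis (N:ℤ)) * ⟨0,0,1⟩ = ⟨0,0,1⟩ * ⟨1,0,0⟩ := by ext <;> simp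
    rw [e]; ring
  · show ev f (⟨0,1,0⟩, ⟨0,0,1⟩) - ev f (⟨0,0,1⟩, ⟨0,1,0⟩) = 0
    rw [hx', hx']
    have e : (⟨0,1,0⟩ : Heis (N:ℤ)) * ⟨0,0,1⟩ = ⟨0,0,1⟩ * ⟨0,1,0⟩ := by ext <;> simp
    rw [e]; ring
  · show ((alph f : ℤ) : ZMod N) = 0
    rw [ha]
    push_cast
    simp

lemma ker_le_cob (N : ℕ) (f : twoCocycles (Rep.trivial ℤ (Heis (N:ℤ)) ℤ))
    (hf : Phi N f = 0) : f ∈ twoCoboundaries (Rep.trivial ℤ (Heis (N:ℤ)) ℤ) := by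
  have h1 : ev f (⟨1,0,0⟩, ⟨0,0,1⟩) - ev f (⟨0,0,1⟩, ⟨1,0,0⟩) = 0 :=
    congrArg (fun t => t.1) hf
  have h2 : ev f (⟨0,1,0⟩, ⟨0,0,1⟩) - ev f (⟨0,0,1⟩, ⟨0,1,0⟩) = 0 :=
    congrArg (fun t => t.2.1) hf
  have h3 : ((alph f : ℤ) : ZMod N) = 0 := congrArg (fun t => t.2.2) hf
  have hdvd : ((N:ℕ):ℤ) ∣ alph f := (ZMod.intCast_zmod_eq_zero_iff_dvd _ N).1 h3
  obtain ⟨m, hm⟩ := hdvd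
  rw [alph_def] at hm
  set c := ev f (1, 1) with hc
  let F : Co (N:ℤ) :=
    { f := fun g h => ev f (g, h) - c
      co := fun g h l => by
        have h5 := ev_co f g h l
        show (ev f (h, l) - c) - (ev f (g * h, l) - c) + (ev f (g, h * l) - c)
          - (ev f (g, h) - c) = 0
        linarith
      one := by show ev f (1, 1) - c = 0; rw [hc]; ring }
  have hβ : F.f ⟨1,0,0⟩ ⟨0,0,1⟩ = F.f ⟨0,0,1⟩ ⟨1,0,0⟩ := by
    show ev f (⟨1,0,0⟩, ⟨0,0,1⟩) - c = ev f (⟨0,0,1⟩, ⟨1,0,0⟩) - c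
    linarith
  have hγ : F.f ⟨0,1,0⟩ ⟨0,0,1⟩ = F.f ⟨0,0,1⟩ ⟨0,1,0⟩ := by
    show ev f (⟨0,1,0⟩, ⟨0,0,1⟩) - c = ev f (⟨0,0,1⟩, ⟨0,1,0⟩) - c
    linarith
  have hα : F.f ⟨1,0,0⟩ ⟨0,1,0⟩ =
      F.f ⟨0,1,0⟩ ⟨1,0,0⟩ + F.f ⟨1,1,0⟩ ⟨0,0,(N:ℤ)⟩ + (N:ℤ) * (m + c) +
        ∑ i ∈ Finset.range N, F.f ⟨0,0,(i:ℤ)⟩ ⟨0,0,1⟩ := by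
    have hsum : ∑ i ∈ Finset.range N, (ev f (⟨0,0,(i:ℤ)⟩, ⟨0,0,1⟩) - c)
        = (∑ i ∈ Finset.range N, ev f (⟨0,0,(i:ℤ)⟩, ⟨0,0,1⟩)) - (N:ℤ) * c := by
      rw [Finset.sum_sub_distrib, Finset.sum_const, Finset.card_range, nsmul_eq_mul]
    show ev f (⟨1,0,0⟩, ⟨0,1,0⟩) - c = (ev f (⟨0,1,0⟩, ⟨1,0,0⟩) - c)
      + (ev f (⟨1,1,0⟩, ⟨0,0,(N:ℤ)⟩) - c) + (N:ℤ) * (m + c)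
      + ∑ i ∈ Finset.range N, (ev f (⟨0,0,(i:ℤ)⟩, ⟨0,0,1⟩) - c)
    rw [hsum]
    linarith
  obtain ⟨φ, hφ⟩ := key N F hβ hγ (m + c) hα
  rw [mem_twoCoboundaries_iff]
  refine ⟨fun g => -φ g + c, fun g h => ?_⟩
  have h4 : ev f (g, h) - c = φ (g * h) - φ g - φ h := hφ g h
  rw [Rep.trivial_ρ_apply]
  show (-φ h + c) - (-φ (g * h) + c) + (-φ g + c) = ev f (g, h)
  linarith

end HeisH2

/-- For every integer `k ≥ 1`, the second group cohomology of `Heis k` with coefficients in the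
trivial module `ℤ` is isomorphic, as an abelian group, to `ℤ × ℤ × (ℤ/kℤ)`. -/
theorem heis_H2 (k : ℕ) (hk : 1 ≤ k) :
    Nonempty (groupCohomology.H2 (Rep.trivial ℤ (Heis (k : ℤ)) ℤ) ≃+ ℤ × ℤ × ZMod k) := by
  classical
  letI : Module ℤ (HeisH2.twoCocycles (Rep.trivial ℤ (Heis (k : ℤ)) ℤ)) := Submodule.module _
  let Φ : HeisH2.twoCocycles (Rep.trivial ℤ (Heis (k : ℤ)) ℤ) →ₗ[ℤ] ℤ × ℤ × ZMod k :=
    { toFun := HeisH2.Phi k, map_add' := map_add _,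
      map_smul' := fun c x => map_zsmul (HeisH2.Phi k) c x }
  have hle : HeisH2.twoCoboundaries (Rep.trivial ℤ (Heis (k : ℤ)) ℤ)
      ≤ LinearMap.ker Φ := fun f hf => HeisH2.cob_le_ker k f hf
  have hge : LinearMap.ker Φ
      ≤ HeisH2.twoCoboundaries (Rep.trivial ℤ (Heis (k : ℤ)) ℤ) :=
    fun f hf => HeisH2.ker_le_cob k f hf
  let q := Submodule.liftQ _ Φ hle
  have hinj : Function.Injective q := by
    rw [← LinearMap.ker_eq_bot]
    exact Submodule.ker_liftQ_eq_bot _ _ _ hge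
  have hsurj : Function.Surjective q := by
    intro y
    obtain ⟨x, hx⟩ := HeisH2.Phi_surj k y
    exact ⟨Submodule.Quotient.mk x, hx⟩
  exact ⟨((groupCohomology.H2Iso _).toLinearEquiv.trans
    (LinearEquiv.ofBijective q ⟨hinj, hsurj⟩)).toAddEquiv⟩
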